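/- arXiv:2309.03430 — 4 statements merged into one kernel-verified Lean document; each statement's English description precedes it below -/
import Mathlib

section
/- Let a > 0, λ1, λ2 with 0 > λ1 > λ2, and set d = λ1·λ2 and τ = λ1 + λ2. Define y0(t) = a·ψ(t)/(d·(e^{λ1 t} - e^{λ2 t})) for t > 0, where ψ(t) = λ1 - λ2 + λ2·e^{λ1 t} - λ1·e^{λ2 t}. Then y0 is strictly increasing on (0, +∞), with y0(t) → 0 as t → 0⁺ and y0(t) → +∞ as t → +∞. -/
noncomputable def psi (l1 l2 t : ℝ) : ℝ :=
  l1 - l2 + l2 * Real.exp (l1 * t) - l1 * Real.exp (l2 * t)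

noncomputable def y0fun (a l1 l2 t : ℝ) : ℝ :=
  a * psi l1 l2 t / (l1 * l2 * (Real.exp (l1 * t) - Real.exp (l2 * t)))

open Real Filter Set

private lemma welander_aux_exp (s : ℝ) (hs : 0 < s) : Real.exp s - 1 < s * Real.exp s := by
  have h := Real.add_one_lt_exp (show (-s) ≠ 0 by linarith)
  rw [Real.exp_neg] at h
  have hE := Real.exp_pos s
  have h2 := mul_lt_mul_of_pos_right h hE
  rw [inv_mul_cancel₀ (ne_of_gt hE)] at h2
  nlinarith

private lemma welander_ratio_mono (s1 s2 : ℝ) (hs1 : 0 < s1) (hlt : s1 < s2) :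
    s2 * (Real.exp s1 - 1) < s1 * (Real.exp s2 - 1) := by
  have hmono : StrictMonoOn (fun s => (Real.exp s - 1) / s) (Set.Ioi 0) := by
    apply strictMonoOn_of_deriv_pos (convex_Ioi 0)
    · exact ((Real.continuous_exp.sub continuous_const).continuousOn).div
        continuousOn_id (fun x hx => ne_of_gt hx)
    · intro x hx
      rw [interior_Ioi] at hx
      have hd : HasDerivAt (fun s => (Real.exp s - 1) / s)
          ((Real.exp x * x - (Real.exp x - 1) * 1) / x ^ 2) x :=
        ((Real.hasDerivAt_exp x).sub_const 1).div (hasDerivAt_id x) (ne_of_gt hx)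
      rw [hd.deriv]
      apply div_pos
      · nlinarith [welander_aux_exp x hx]
      · exact pow_pos hx 2
  have h := hmono (show s1 ∈ Set.Ioi 0 from hs1)
    (show s2 ∈ Set.Ioi 0 from lt_trans hs1 hlt) hlt
  rw [div_lt_div_iff₀ hs1 (lt_trans hs1 hlt)] at h
  linarith

private lemma welander_g_pos (l1 l2 t : ℝ) (h1 : 0 > l1) (h2 : l1 > l2) (ht : 0 < t) :
    0 < (l1 - l2) * (Real.exp (l1 * t) * Real.exp (l2 * t))
        - l1 * Real.exp (l1 * t) + l2 * Real.exp (l2 * t) := by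
  set U := Real.exp (l1 * t) with hU
  set V := Real.exp (l2 * t) with hV
  have hUpos : 0 < U := Real.exp_pos _
  have hVpos : 0 < V := Real.exp_pos _
  have hs1 : 0 < -(l1 * t) := by nlinarith
  have hlt : -(l1 * t) < -(l2 * t) := by nlinarith
  have key := welander_ratio_mono (-(l1 * t)) (-(l2 * t)) hs1 hlt
  rw [Real.exp_neg, Real.exp_neg, ← hU, ← hV] at key
  have key2 := mul_lt_mul_of_pos_right key (mul_pos hUpos hVpos)
  have e1 : -(l2 * t) * (U⁻¹ - 1) * (U * V) = t * (l2 * (U * V) - l2 * V) := by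
    field_simp
    ring
  have e2 : -(l1 * t) * (V⁻¹ - 1) * (U * V) = t * (l1 * (U * V) - l1 * U) := by
    field_simp
    ring
  rw [e1, e2] at key2
  have key3 := (mul_lt_mul_iff_right₀ ht).mp key2
  linarith

private lemma welander_form (a l1 l2 t : ℝ) (h1 : 0 > l1) (h2 : l1 > l2) (ht : 0 < t) :
    y0fun a l1 l2 t = a / l1 + (a * (l1 - l2) / (l1 * l2)) *
      ((1 - Real.exp (l2 * t)) / (Real.exp (l1 * t) - Real.exp (l2 * t))) := by
  have hne : Real.exp (l1 * t) - Real.exp (l2 * t) ≠ 0 := by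
    have : Real.exp (l2 * t) < Real.exp (l1 * t) := Real.exp_lt_exp.mpr (by nlinarith)
    linarith
  have hl1 : l1 ≠ 0 := ne_of_lt h1
  have hl2 : l2 ≠ 0 := by intro h; rw [h] at h2; linarith
  unfold y0fun psi
  field_simp
  ring

private lemma welander_R_mono (l1 l2 : ℝ) (h1 : 0 > l1) (h2 : l1 > l2) :
    StrictMonoOn (fun t => (1 - Real.exp (l2 * t)) / (Real.exp (l1 * t) - Real.exp (l2 * t)))
      (Set.Ioi 0) := by
  have hden : ∀ x ∈ Set.Ioi (0:ℝ), Real.exp (l1 * x) - Real.exp (l2 * x) ≠ 0 := by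
    intro x hx
    have : Real.exp (l2 * x) < Real.exp (l1 * x) :=
      Real.exp_lt_exp.mpr (by nlinarith [mem_Ioi.mp hx])
    linarith
  apply strictMonoOn_of_deriv_pos (convex_Ioi 0)
  · exact ((continuous_const.sub
        (Real.continuous_exp.comp (continuous_const.mul continuous_id))).continuousOn).div
      (((Real.continuous_exp.comp (continuous_const.mul continuous_id)).sub
        (Real.continuous_exp.comp (continuous_const.mul continuous_id))).continuousOn) hden
  · intro x hx
    rw [interior_Ioi] at hx
    have hxIoi : x ∈ Set.Ioi (0:ℝ) := hx
    have hUx : HasDerivAt (fun t : ℝ => Real.exp (l1 * t)) (Real.exp (l1 * x) * l1) x := by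
      simpa using ((hasDerivAt_id x).const_mul l1).exp
    have hVx : HasDerivAt (fun t : ℝ => Real.exp (l2 * t)) (Real.exp (l2 * x) * l2) x := by
      simpa using ((hasDerivAt_id x).const_mul l2).exp
    have hN : HasDerivAt (fun t : ℝ => 1 - Real.exp (l2 * t)) (-(Real.exp (l2 * x) * l2)) x :=
      hVx.const_sub 1
    have hD : HasDerivAt (fun t : ℝ => Real.exp (l1 * t) - Real.exp (l2 * t))
        (Real.exp (l1 * x) * l1 - Real.exp (l2 * x) * l2) x := hUx.sub hVx
    have hR := hN.div hD (hden x hxIoi)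
    rw [(show HasDerivAt (fun t : ℝ => (1 - Real.exp (l2 * t)) / (Real.exp (l1 * t) - Real.exp (l2 * t))) _ x from hR).deriv]
    apply div_pos
    · have hg := welander_g_pos l1 l2 x h1 h2 hxIoi
      nlinarith [hg]
    · have hlt : Real.exp (l2 * x) < Real.exp (l1 * x) :=
        Real.exp_lt_exp.mpr (by nlinarith [mem_Ioi.mp hxIoi])
      exact pow_pos (sub_pos.mpr hlt) 2

private lemma welander_R_atTop (l1 l2 : ℝ) (h1 : 0 > l1) (h2 : l1 > l2) :
    Tendsto (fun t => (1 - Real.exp (l2 * t)) / (Real.exp (l1 * t) - Real.exp (l2 * t)))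
      atTop atTop := by
  have hl1 : Tendsto (fun t : ℝ => l1 * t) atTop atBot :=
    tendsto_id.const_mul_atTop_of_neg h1
  have hl2 : Tendsto (fun t : ℝ => l2 * t) atTop atBot :=
    tendsto_id.const_mul_atTop_of_neg (by linarith)
  have hU0 : Tendsto (fun t : ℝ => Real.exp (l1 * t)) atTop (nhds 0) :=
    Real.tendsto_exp_atBot.comp hl1
  have hV0 : Tendsto (fun t : ℝ => Real.exp (l2 * t)) atTop (nhds 0) :=
    Real.tendsto_exp_atBot.comp hl2
  have hN1 : Tendsto (fun t : ℝ => 1 - Real.exp (l2 * t)) atTop (nhds 1) := by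
    simpa using tendsto_const_nhds.sub hV0
  have hD0 : Tendsto (fun t : ℝ => Real.exp (l1 * t) - Real.exp (l2 * t)) atTop
      (nhdsWithin 0 (Set.Ioi 0)) := by
    apply tendsto_nhdsWithin_of_tendsto_nhds_of_eventually_within
    · simpa using hU0.sub hV0
    · filter_upwards [eventually_gt_atTop (0:ℝ)] with t ht
      have : Real.exp (l2 * t) < Real.exp (l1 * t) := Real.exp_lt_exp.mpr (by nlinarith)
      exact mem_Ioi.mpr (by linarith)
  have hDinv : Tendsto (fun t : ℝ => (Real.exp (l1 * t) - Real.exp (l2 * t))⁻¹) atTop atTop :=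
    tendsto_inv_nhdsGT_zero.comp hD0
  have := hN1.pos_mul_atTop zero_lt_one hDinv
  simpa [div_eq_mul_inv] using this

private lemma welander_R_zero (l1 l2 : ℝ) (h1 : 0 > l1) (h2 : l1 > l2) :
    Tendsto (fun t => (1 - Real.exp (l2 * t)) / (Real.exp (l1 * t) - Real.exp (l2 * t)))
      (nhdsWithin 0 (Set.Ioi 0)) (nhds ((-l2) / (l1 - l2))) := by
  have hN : HasDerivAt (fun t : ℝ => 1 - Real.exp (l2 * t)) (-l2) 0 := by
    have hVx : HasDerivAt (fun t : ℝ => Real.exp (l2 * t)) (Real.exp (l2 * 0) * l2) 0 := by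
      simpa using ((hasDerivAt_id (0:ℝ)).const_mul l2).exp
    simpa using hVx.const_sub 1
  have hD : HasDerivAt (fun t : ℝ => Real.exp (l1 * t) - Real.exp (l2 * t)) (l1 - l2) 0 := by
    have hUx : HasDerivAt (fun t : ℝ => Real.exp (l1 * t)) (Real.exp (l1 * 0) * l1) 0 := by
      simpa using ((hasDerivAt_id (0:ℝ)).const_mul l1).exp
    have hVx : HasDerivAt (fun t : ℝ => Real.exp (l2 * t)) (Real.exp (l2 * 0) * l2) 0 := by
      simpa using ((hasDerivAt_id (0:ℝ)).const_mul l2).exp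
    exact (hUx.sub hVx).congr_deriv (by simp)
  have hNs := hasDerivAt_iff_tendsto_slope.mp hN
  have hDs := hasDerivAt_iff_tendsto_slope.mp hD
  have hsub : nhdsWithin (0:ℝ) (Set.Ioi 0) ≤ nhdsWithin 0 {(0:ℝ)}ᶜ :=
    nhdsWithin_mono 0 (fun x hx => ne_of_gt hx)
  have hN' : Tendsto (fun t : ℝ => (1 - Real.exp (l2 * t)) / t)
      (nhdsWithin 0 (Set.Ioi 0)) (nhds (-l2)) := by
    apply Tendsto.congr' _ (hNs.mono_left hsub)
    filter_upwards [self_mem_nhdsWithin] with t ht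
    simp [slope_def_field]
  have hD' : Tendsto (fun t : ℝ => (Real.exp (l1 * t) - Real.exp (l2 * t)) / t)
      (nhdsWithin 0 (Set.Ioi 0)) (nhds (l1 - l2)) := by
    apply Tendsto.congr' _ (hDs.mono_left hsub)
    filter_upwards [self_mem_nhdsWithin] with t ht
    simp [slope_def_field]
  have hdiv := hN'.div hD' (by intro h; rw [sub_eq_zero] at h; linarith)
  apply Tendsto.congr' _ hdiv
  filter_upwards [self_mem_nhdsWithin] with t ht
  have htne : t ≠ 0 := ne_of_gt ht
  have hne : Real.exp (l1 * t) - Real.exp (l2 * t) ≠ 0 := by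
    have : Real.exp (l2 * t) < Real.exp (l1 * t) :=
      Real.exp_lt_exp.mpr (by nlinarith [mem_Ioi.mp ht])
    linarith
  show (1 - Real.exp (l2 * t)) / t / ((Real.exp (l1 * t) - Real.exp (l2 * t)) / t) = _
  field_simp

theorem y0_increasing_and_limits (a l1 l2 : ℝ) (ha : a > 0) (h1 : 0 > l1) (h2 : l1 > l2) :
    StrictMonoOn (fun t => y0fun a l1 l2 t) (Set.Ioi 0) ∧
    Filter.Tendsto (fun t => y0fun a l1 l2 t) (nhdsWithin 0 (Set.Ioi 0)) (nhds 0) ∧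
    Filter.Tendsto (fun t => y0fun a l1 l2 t) Filter.atTop Filter.atTop := by
  have hl1 : l1 ≠ 0 := ne_of_lt h1
  have hl2 : l2 ≠ 0 := by intro h; rw [h] at h2; linarith
  have hk : 0 < a * (l1 - l2) / (l1 * l2) := by
    apply div_pos
    · nlinarith
    · nlinarith
  refine ⟨?_, ?_, ?_⟩
  · intro x hx y hy hxy
    have hfx := welander_form a l1 l2 x h1 h2 (mem_Ioi.mp hx)
    have hfy := welander_form a l1 l2 y h1 h2 (mem_Ioi.mp hy)
    simp only [hfx, hfy]
    have := welander_R_mono l1 l2 h1 h2 hx hy hxy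
    have := mul_lt_mul_of_pos_left this hk
    linarith
  · have hR0 := welander_R_zero l1 l2 h1 h2
    have hlim : Tendsto (fun t => a / l1 + (a * (l1 - l2) / (l1 * l2)) *
        ((1 - Real.exp (l2 * t)) / (Real.exp (l1 * t) - Real.exp (l2 * t))))
        (nhdsWithin 0 (Set.Ioi 0))
        (nhds (a / l1 + (a * (l1 - l2) / (l1 * l2)) * ((-l2) / (l1 - l2)))) :=
      tendsto_const_nhds.add (hR0.const_mul _)
    have heq : a / l1 + (a * (l1 - l2) / (l1 * l2)) * ((-l2) / (l1 - l2)) = 0 := by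
      have hc : l1 - l2 ≠ 0 := by intro h; rw [sub_eq_zero] at h; linarith
      field_simp
      ring
    rw [heq] at hlim
    apply Tendsto.congr' _ hlim
    filter_upwards [self_mem_nhdsWithin] with t ht
    exact (welander_form a l1 l2 t h1 h2 (mem_Ioi.mp ht)).symm
  · have hRT := welander_R_atTop l1 l2 h1 h2
    have hlim : Tendsto (fun t => a / l1 + (a * (l1 - l2) / (l1 * l2)) *
        ((1 - Real.exp (l2 * t)) / (Real.exp (l1 * t) - Real.exp (l2 * t)))) atTop atTop :=
      tendsto_atTop_add_const_left _ _ (hRT.const_mul_atTop hk)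
    apply Tendsto.congr' _ hlim
    filter_upwards [eventually_gt_atTop (0:ℝ)] with t ht
    exact (welander_form a l1 l2 t h1 h2 ht).symm
end

section
/- Let a > 0 and 0 > λ1 > λ2, d = λ1·λ2. Define y1(t) = -a·e^{(λ1+λ2)t}·ψ(-t)/(d·(e^{λ1 t} - e^{λ2 t})) for t > 0, where ψ(s) = λ1 - λ2 + λ2·e^{λ1 s} - λ1·e^{λ2 s}. Then y1 is strictly decreasing on (0, +∞), with y1(t) → 0 as t → 0⁺ and y1(t) → a/λ2 as t → +∞. -/
noncomputable def y1fun (a l1 l2 t : ℝ) : ℝ :=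
  -a * Real.exp ((l1 + l2) * t) * psi l1 l2 (-t) /
    (l1 * l2 * (Real.exp (l1 * t) - Real.exp (l2 * t)))

open Real Filter Set

noncomputable def hfun (p r t : ℝ) : ℝ := (1 - Real.exp (-p * t)) / (Real.exp (r * t) - 1)

-- key numerator inequality
lemma aux_ineq (p r t : ℝ) (hp : 0 < p) (hr : 0 < r) (ht : 0 < t) :
    p * exp (-p * t) * (exp (r * t) - 1) - (1 - exp (-p * t)) * (r * exp (r * t)) < 0 := by
  set A := exp (r * t) with hA
  set B := exp (-p * t) with hB
  have hApos : 0 < A := exp_pos _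
  have hBpos : 0 < B := exp_pos _
  have hAB : exp (-(r*t)) * A = 1 := by rw [hA, ← exp_add]; simp
  have h1 : A - 1 ≤ r * t * A := by
    have := Real.add_one_le_exp (-(r*t))
    nlinarith [exp_pos (-(r*t))]
  have h2 : (p*t + 1) * B < 1 := by
    have hlt := Real.add_one_lt_exp (x := p*t) (by positivity)
    have hBB : B * exp (p*t) = 1 := by rw [hB, ← exp_add]; simp
    nlinarith [exp_pos (p*t)]
  nlinarith [mul_pos (mul_pos hp hBpos) (mul_pos hr hApos), mul_pos hr hApos,
    mul_le_mul_of_nonneg_left h1 (le_of_lt (mul_pos hp hBpos)),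
    mul_lt_mul_of_pos_right h2 (mul_pos hr hApos)]

lemma hfun_hasDeriv (p r t : ℝ) (hden : exp (r * t) - 1 ≠ 0) :
    HasDerivAt (fun s => hfun p r s)
      ((p * exp (-p * t) * (exp (r * t) - 1) - (1 - exp (-p * t)) * (r * exp (r * t))) /
        (exp (r * t) - 1) ^ 2) t := by
  have hnum : HasDerivAt (fun s : ℝ => 1 - exp (-p * s)) (p * exp (-p * t)) t := by
    have h0 : HasDerivAt (fun s : ℝ => -p * s) (-p) t := by
      simpa using (hasDerivAt_id t).const_mul (-p)
    have := (h0.exp).const_sub 1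
    simpa [mul_comm] using this
  have hd : HasDerivAt (fun s : ℝ => exp (r * s) - 1) (r * exp (r * t)) t := by
    have h0 : HasDerivAt (fun s : ℝ => r * s) r t := by
      simpa using (hasDerivAt_id t).const_mul r
    have := (h0.exp).sub_const 1
    simpa [mul_comm] using this
  simpa [hfun, Pi.div_def] using hnum.div hd hden

lemma hfun_anti (p r : ℝ) (hp : 0 < p) (hr : 0 < r) :
    StrictAntiOn (fun t => hfun p r t) (Set.Ioi 0) := by
  apply strictAntiOn_of_deriv_neg (convex_Ioi 0)
  · apply ContinuousOn.div
    · fun_prop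
    · fun_prop
    · intro t ht
      have : (1:ℝ) < exp (r * t) := by
        rw [Real.one_lt_exp_iff]  -- name guess
        exact mul_pos hr ht
      linarith
  · intro t ht
    rw [interior_Ioi] at ht
    have hden : exp (r * t) - 1 ≠ 0 := by
      have : (1:ℝ) < exp (r * t) := by
        rw [Real.one_lt_exp_iff]
        exact mul_pos hr ht
      linarith
    rw [(hfun_hasDeriv p r t hden).deriv]
    apply div_neg_of_neg_of_pos
    · exact aux_ineq p r t hp hr ht
    · positivity

lemma hfun_lim_zero (p r : ℝ) (hp : 0 < p) (hr : 0 < r) :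
    Tendsto (fun t => hfun p r t) (nhdsWithin 0 (Set.Ioi 0)) (nhds (p / r)) := by
  have d1 : HasDerivAt (fun s : ℝ => 1 - exp (-p * s)) p 0 := by
    have h0 : HasDerivAt (fun s : ℝ => -p * s) (-p) 0 := by
      simpa using (hasDerivAt_id (0:ℝ)).const_mul (-p)
    have := (h0.exp).const_sub 1
    simpa using this
  have d2 : HasDerivAt (fun s : ℝ => exp (r * s) - 1) r 0 := by
    have h0 : HasDerivAt (fun s : ℝ => r * s) r 0 := by
      simpa using (hasDerivAt_id (0:ℝ)).const_mul r
    have := (h0.exp).sub_const 1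
    simpa using this
  have t1 := hasDerivAt_iff_tendsto_slope.1 d1
  have t2 := hasDerivAt_iff_tendsto_slope.1 d2
  have tdiv : Tendsto (fun t => slope (fun s : ℝ => 1 - exp (-p * s)) 0 t /
      slope (fun s : ℝ => exp (r * s) - 1) 0 t) (nhdsWithin 0 {(0:ℝ)}ᶜ) (nhds (p / r)) :=
    t1.div t2 (ne_of_gt hr)
  have tdiv' := tdiv.mono_left (nhdsWithin_mono 0 (fun x hx => ne_of_gt hx))
  apply tdiv'.congr'
  filter_upwards [self_mem_nhdsWithin] with t ht
  have ht' : (t:ℝ) ≠ 0 := ne_of_gt ht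
  simp only [slope_def_field, hfun, mul_zero, Real.exp_zero, sub_self, sub_zero]
  exact div_div_div_cancel_right₀ ht' _ _

lemma hfun_lim_top (p r : ℝ) (hp : 0 < p) (hr : 0 < r) :
    Tendsto (fun t => hfun p r t) atTop (nhds 0) := by
  have hnum : Tendsto (fun t : ℝ => 1 - exp (-p * t)) atTop (nhds 1) := by
    have h1 : Tendsto (fun t : ℝ => -p * t) atTop atBot :=
      (tendsto_const_mul_atBot_of_neg (by linarith)).2 tendsto_id
    have := Real.tendsto_exp_atBot.comp h1
    simpa using (tendsto_const_nhds (x := (1:ℝ))).sub this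
  have hden : Tendsto (fun t : ℝ => exp (r * t) - 1) atTop atTop := by
    have h1 : Tendsto (fun t : ℝ => r * t) atTop atTop :=
      (tendsto_const_mul_atTop_of_pos hr).2 tendsto_id
    exact tendsto_atTop_add_const_right _ (-1) (Real.tendsto_exp_atTop.comp h1) |>.congr
      (fun t => by simp [sub_eq_add_neg])
  exact hnum.div_atTop hden

lemma y1_eq (a l1 l2 : ℝ) (h1 : 0 > l1) (h2 : l1 > l2) {t : ℝ} (ht : 0 < t) :
    y1fun a l1 l2 t = a / l2 + (a * (l1 - l2) / (l1 * l2)) * hfun (-l1) (l1 - l2) t := by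
  have hl1 : l1 ≠ 0 := ne_of_lt h1
  have hl2 : l2 ≠ 0 := by linarith
  have hupos : (0:ℝ) < exp (l1 * t) := exp_pos _
  have hvpos : (0:ℝ) < exp (l2 * t) := exp_pos _
  have hvu : exp (l2 * t) < exp (l1 * t) := by
    apply Real.exp_lt_exp.2
    exact mul_lt_mul_of_pos_right h2 ht
  unfold y1fun psi hfun
  rw [show (l1 + l2) * t = l1 * t + l2 * t by ring, Real.exp_add]
  rw [show l1 * -t = -(l1 * t) by ring, show l2 * -t = -(l2 * t) by ring,
    Real.exp_neg (l1*t), Real.exp_neg (l2*t)]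
  rw [show -(-l1) * t = l1 * t by ring]
  rw [show (l1 - l2) * t = l1 * t + -(l2 * t) by ring, Real.exp_add, Real.exp_neg (l2*t)]
  set u := exp (l1 * t)
  set v := exp (l2 * t)
  have huv : u - v ≠ 0 := sub_ne_zero.2 (ne_of_gt hvu)
  have huv1 : u * v⁻¹ - 1 ≠ 0 := by
    have : (1:ℝ) < u * v⁻¹ := by
      rw [← div_eq_mul_inv]
      exact (one_lt_div hvpos).2 hvu
    linarith
  field_simp
  ring

theorem y1_decreasing_and_limits (a l1 l2 : ℝ) (ha : a > 0) (h1 : 0 > l1) (h2 : l1 > l2) :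
    StrictAntiOn (fun t => y1fun a l1 l2 t) (Set.Ioi 0) ∧
    Filter.Tendsto (fun t => y1fun a l1 l2 t) (nhdsWithin 0 (Set.Ioi 0)) (nhds 0) ∧
    Filter.Tendsto (fun t => y1fun a l1 l2 t) Filter.atTop (nhds (a / l2)) := by
  have hp : (0:ℝ) < -l1 := by linarith
  have hr : (0:ℝ) < l1 - l2 := by linarith
  have hl1 : l1 ≠ 0 := ne_of_lt h1
  have hl2 : l2 ≠ 0 := by linarith
  have hK : (0:ℝ) < a * (l1 - l2) / (l1 * l2) := by
    apply div_pos (by positivity)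
    exact mul_pos_of_neg_of_neg h1 (by linarith)
  refine ⟨?_, ?_, ?_⟩
  · intro x hx y hy hxy
    simp only
    rw [y1_eq a l1 l2 h1 h2 hx, y1_eq a l1 l2 h1 h2 hy]
    have hh := hfun_anti (-l1) (l1 - l2) hp hr hx hy hxy
    simp only at hh
    nlinarith [mul_lt_mul_of_pos_left hh hK]
  · have base : Tendsto (fun t => a / l2 + (a * (l1 - l2) / (l1 * l2)) * hfun (-l1) (l1 - l2) t)
        (nhdsWithin 0 (Set.Ioi 0)) (nhds (a / l2 + (a * (l1 - l2) / (l1 * l2)) * (-l1 / (l1 - l2)))) :=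
      tendsto_const_nhds.add (tendsto_const_nhds.mul (hfun_lim_zero (-l1) (l1 - l2) hp hr))
    have hval : a / l2 + (a * (l1 - l2) / (l1 * l2)) * (-l1 / (l1 - l2)) = 0 := by
      field_simp
      ring
    rw [hval] at base
    apply base.congr'
    filter_upwards [self_mem_nhdsWithin] with t ht
    exact (y1_eq a l1 l2 h1 h2 ht).symm
  · have base : Tendsto (fun t => a / l2 + (a * (l1 - l2) / (l1 * l2)) * hfun (-l1) (l1 - l2) t)
        atTop (nhds (a / l2 + (a * (l1 - l2) / (l1 * l2)) * 0)) :=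
      tendsto_const_nhds.add (tendsto_const_nhds.mul (hfun_lim_top (-l1) (l1 - l2) hp hr))
    rw [mul_zero, add_zero] at base
    apply base.congr'
    filter_upwards [eventually_gt_atTop 0] with t ht
    exact (y1_eq a l1 l2 h1 h2 ht).symm
end

section
/- Let 0 > λ1 > λ2 and a > 0. With y0(t) = a·ψ(t)/(d·(e^{λ1 t} - e^{λ2 t})) and y1(t) = -a·e^{(λ1+λ2)t}·ψ(-t)/(d·(e^{λ1 t} - e^{λ2 t})) for t > 0 and d = λ1·λ2, where ψ(s) = λ1 - λ2 + λ2·e^{λ1 s} - λ1·e^{λ2 s}, the left Poincaré map P_L defined implicitly by P_L(y0(t)) = y1(t) satisfies dy1/dy0 = -ψ(t)/ψ(-t) < 0 for all t > 0; hence P_L is strictly decreasing on (0, +∞). -/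
lemma hasDerivAt_expc (c t : ℝ) :
    HasDerivAt (fun s => Real.exp (c * s)) (c * Real.exp (c * t)) t := by
  simpa [mul_comm] using ((hasDerivAt_id t).const_mul c).exp

lemma hasDerivAt_psi (l1 l2 t : ℝ) :
    HasDerivAt (fun s => psi l1 l2 s)
      (l1 * l2 * (Real.exp (l1 * t) - Real.exp (l2 * t))) t := by
  have h := (((hasDerivAt_expc l1 t).const_mul l2).sub
    ((hasDerivAt_expc l2 t).const_mul l1)).const_add (l1 - l2)
  refine HasDerivAt.congr_of_eventuallyEq (h.congr_deriv ?_) (Filter.Eventually.of_forall fun s => ?_)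
  · ring
  · simp only [psi, Pi.sub_apply]; ring

lemma psi_zero (l1 l2 : ℝ) : psi l1 l2 0 = 0 := by simp [psi]

lemma psi_pos {l1 l2 : ℝ} (h1 : 0 > l1) (h2 : l1 > l2) {t : ℝ} (ht : t ≠ 0) :
    0 < psi l1 l2 t := by
  have hd : (0:ℝ) < l1 * l2 := mul_pos_of_neg_of_neg h1 (h2.trans h1)
  have hcont : Continuous (fun s => psi l1 l2 s) := by
    unfold psi; continuity
  rcases ht.lt_or_gt with h | h
  · have hanti : StrictAntiOn (fun s => psi l1 l2 s) (Set.Iic 0) := by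
      apply strictAntiOn_of_deriv_neg (convex_Iic 0) hcont.continuousOn
      intro s hs
      rw [interior_Iic] at hs
      rw [(hasDerivAt_psi l1 l2 s).deriv]
      have hE : Real.exp (l1 * s) < Real.exp (l2 * s) := by
        apply Real.exp_lt_exp.mpr; nlinarith [hs.out]
      nlinarith
    have := hanti h.le (by simp : (0:ℝ) ∈ Set.Iic 0) h
    simpa [psi_zero] using this
  · have hmono : StrictMonoOn (fun s => psi l1 l2 s) (Set.Ici 0) := by
      apply strictMonoOn_of_deriv_pos (convex_Ici 0) hcont.continuousOn
      intro s hs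
      rw [interior_Ici] at hs
      rw [(hasDerivAt_psi l1 l2 s).deriv]
      have hE : Real.exp (l2 * s) < Real.exp (l1 * s) := by
        apply Real.exp_lt_exp.mpr; nlinarith [hs.out]
      nlinarith
    have := hmono (by simp : (0:ℝ) ∈ Set.Ici 0) h.le h
    simpa [psi_zero] using this

lemma den_pos {l1 l2 : ℝ} (h1 : 0 > l1) (h2 : l1 > l2) {t : ℝ} (ht : 0 < t) :
    0 < l1 * l2 * (Real.exp (l1 * t) - Real.exp (l2 * t)) := by
  have hd : (0:ℝ) < l1 * l2 := mul_pos_of_neg_of_neg h1 (h2.trans h1)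
  have hE : Real.exp (l2 * t) < Real.exp (l1 * t) := by
    apply Real.exp_lt_exp.mpr; nlinarith
  nlinarith

lemma hasDerivAt_y0 {a l1 l2 : ℝ} (h1 : 0 > l1) (h2 : l1 > l2) {t : ℝ} (ht : 0 < t) :
    HasDerivAt (fun s => y0fun a l1 l2 s)
      (a * (l1 - l2) * Real.exp (l1 * t) * Real.exp (l2 * t) * psi l1 l2 (-t) /
        (l1 * l2 * (Real.exp (l1 * t) - Real.exp (l2 * t)) ^ 2)) t := by
  have hden := den_pos h1 h2 ht
  have hnum : HasDerivAt (fun s => a * psi l1 l2 s)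
      (a * (l1 * l2 * (Real.exp (l1 * t) - Real.exp (l2 * t)))) t :=
    (hasDerivAt_psi l1 l2 t).const_mul a
  have hdenD : HasDerivAt
      (fun s => l1 * l2 * (Real.exp (l1 * s) - Real.exp (l2 * s)))
      (l1 * l2 * (l1 * Real.exp (l1 * t) - l2 * Real.exp (l2 * t))) t :=
    ((hasDerivAt_expc l1 t).sub (hasDerivAt_expc l2 t)).const_mul (l1 * l2)
  have h := hnum.div hdenD hden.ne'
  refine h.congr_deriv ?_
  have hE1 := Real.exp_ne_zero (l1 * t)
  have hE2 := Real.exp_ne_zero (l2 * t)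
  have hD : Real.exp (l1 * t) - Real.exp (l2 * t) ≠ 0 := by
    intro h0
    rw [h0, mul_zero] at hden
    exact lt_irrefl 0 hden
  have hl : l1 * l2 ≠ 0 := ne_of_gt (mul_pos_of_neg_of_neg h1 (h2.trans h1))
  simp only [psi, mul_neg, Real.exp_neg]
  field_simp
  ring

lemma hasDerivAt_y1 {a l1 l2 : ℝ} (h1 : 0 > l1) (h2 : l1 > l2) {t : ℝ} (ht : 0 < t) :
    HasDerivAt (fun s => y1fun a l1 l2 s)
      (-(a * (l1 - l2) * Real.exp (l1 * t) * Real.exp (l2 * t) * psi l1 l2 t) /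
        (l1 * l2 * (Real.exp (l1 * t) - Real.exp (l2 * t)) ^ 2)) t := by
  have hden := den_pos h1 h2 ht
  -- numerator: -a * exp((l1+l2)s) * psi l1 l2 (-s)
  -- rewrite: exp((l1+l2)s)*psi(-s) = (l1-l2)*exp(l1 s)*exp(l2 s) + l2*exp(l2 s) - l1*exp(l1 s)
  have hnumfun : ∀ s : ℝ, -a * Real.exp ((l1 + l2) * s) * psi l1 l2 (-s) =
      -a * ((l1 - l2) * (Real.exp (l1 * s) * Real.exp (l2 * s))
        + l2 * Real.exp (l2 * s) - l1 * Real.exp (l1 * s)) := by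
    intro s
    simp only [psi, mul_neg, Real.exp_neg, add_mul, Real.exp_add]
    have hE1 := Real.exp_ne_zero (l1 * s)
    have hE2 := Real.exp_ne_zero (l2 * s)
    field_simp
  have hnum : HasDerivAt (fun s => -a * Real.exp ((l1 + l2) * s) * psi l1 l2 (-s))
      (-a * ((l1 - l2) * (l1 * Real.exp (l1 * t) * Real.exp (l2 * t)
          + Real.exp (l1 * t) * (l2 * Real.exp (l2 * t)))
        + l2 * (l2 * Real.exp (l2 * t)) - l1 * (l1 * Real.exp (l1 * t)))) t := by
    have hprod : HasDerivAt (fun s => Real.exp (l1 * s) * Real.exp (l2 * s))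
        (l1 * Real.exp (l1 * t) * Real.exp (l2 * t)
          + Real.exp (l1 * t) * (l2 * Real.exp (l2 * t))) t :=
      (hasDerivAt_expc l1 t).mul (hasDerivAt_expc l2 t)
    have h := (((hprod.const_mul (l1 - l2)).add
        ((hasDerivAt_expc l2 t).const_mul l2)).sub
        ((hasDerivAt_expc l1 t).const_mul l1)).const_mul (-a)
    have h2' : HasDerivAt (fun s => -a * ((l1 - l2) * (Real.exp (l1 * s) * Real.exp (l2 * s))
        + l2 * Real.exp (l2 * s) - l1 * Real.exp (l1 * s)))
      (-a * ((l1 - l2) * (l1 * Real.exp (l1 * t) * Real.exp (l2 * t)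
          + Real.exp (l1 * t) * (l2 * Real.exp (l2 * t)))
        + l2 * (l2 * Real.exp (l2 * t)) - l1 * (l1 * Real.exp (l1 * t)))) t := by
      exact h
    exact h2'.congr_of_eventuallyEq (Filter.Eventually.of_forall fun s => (hnumfun s))
  have hdenD : HasDerivAt
      (fun s => l1 * l2 * (Real.exp (l1 * s) - Real.exp (l2 * s)))
      (l1 * l2 * (l1 * Real.exp (l1 * t) - l2 * Real.exp (l2 * t))) t :=
    ((hasDerivAt_expc l1 t).sub (hasDerivAt_expc l2 t)).const_mul (l1 * l2)
  have h := hnum.div hdenD hden.ne'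
  have heq : (fun s => -a * Real.exp ((l1 + l2) * s) * psi l1 l2 (-s) /
      (l1 * l2 * (Real.exp (l1 * s) - Real.exp (l2 * s)))) = fun s => y1fun a l1 l2 s := rfl
  rw [← heq]
  refine h.congr_deriv ?_
  have hE1 := Real.exp_ne_zero (l1 * t)
  have hE2 := Real.exp_ne_zero (l2 * t)
  have hD : Real.exp (l1 * t) - Real.exp (l2 * t) ≠ 0 := by
    intro h0
    rw [h0, mul_zero] at hden
    exact lt_irrefl 0 hden
  have hl : l1 * l2 ≠ 0 := ne_of_gt (mul_pos_of_neg_of_neg h1 (h2.trans h1))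
  rw [hnumfun t]
  simp only [psi, mul_neg, Real.exp_neg]
  field_simp
  ring

theorem leftPoincare_strictAnti (a l1 l2 : ℝ) (ha : a > 0) (h1 : 0 > l1) (h2 : l1 > l2) :
    (∀ t : ℝ, t > 0 →
      deriv (fun s => y1fun a l1 l2 s) t / deriv (fun s => y0fun a l1 l2 s) t =
        -psi l1 l2 t / psi l1 l2 (-t) ∧ -psi l1 l2 t / psi l1 l2 (-t) < 0) ∧
    (∀ PL : ℝ → ℝ, (∀ t : ℝ, t > 0 → PL (y0fun a l1 l2 t) = y1fun a l1 l2 t) →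
      StrictAntiOn PL ((fun t => y0fun a l1 l2 t) '' Set.Ioi 0)) := by
  have hl12 : 0 < l1 - l2 := sub_pos.mpr h2
  have hdy0pos : ∀ t : ℝ, 0 < t →
      0 < a * (l1 - l2) * Real.exp (l1 * t) * Real.exp (l2 * t) * psi l1 l2 (-t) /
        (l1 * l2 * (Real.exp (l1 * t) - Real.exp (l2 * t)) ^ 2) := by
    intro t ht
    have hψ := psi_pos h1 h2 (by linarith : -t ≠ 0)
    have hD : Real.exp (l1 * t) - Real.exp (l2 * t) ≠ 0 := by
      have := den_pos h1 h2 ht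
      intro h0; rw [h0, mul_zero] at this; exact lt_irrefl 0 this
    have hd : (0:ℝ) < l1 * l2 := mul_pos_of_neg_of_neg h1 (h2.trans h1)
    have := Real.exp_pos (l1 * t)
    have := Real.exp_pos (l2 * t)
    positivity
  constructor
  · intro t ht
    have hy0 := hasDerivAt_y0 (a := a) h1 h2 ht
    have hy1 := hasDerivAt_y1 (a := a) h1 h2 ht
    have hψn := psi_pos h1 h2 (by linarith : -t ≠ 0)
    have hψp := psi_pos h1 h2 (ne_of_gt ht)
    constructor
    · rw [hy0.deriv, hy1.deriv]
      have he1 := Real.exp_pos (l1 * t)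
      have he2 := Real.exp_pos (l2 * t)
      have hd : (0:ℝ) < l1 * l2 := mul_pos_of_neg_of_neg h1 (h2.trans h1)
      have hD : Real.exp (l1 * t) - Real.exp (l2 * t) ≠ 0 := by
        have := den_pos h1 h2 ht
        intro h0; rw [h0, mul_zero] at this; exact lt_irrefl 0 this
      have hC : l1 * l2 * (Real.exp (l1 * t) - Real.exp (l2 * t)) ^ 2 ≠ 0 := by
        positivity
      have hl12' : l1 - l2 ≠ 0 := hl12.ne'
      have hl1 : l1 ≠ 0 := h1.ne
      have hl2 : l2 ≠ 0 := (h2.trans h1).ne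
      field_simp
    · exact div_neg_of_neg_of_pos (neg_neg_of_pos hψp) hψn
  · intro PL hPL
    have hcont0 : ContinuousOn (fun s => y0fun a l1 l2 s) (Set.Ioi 0) := fun t ht =>
      ((hasDerivAt_y0 (a := a) h1 h2 ht).continuousAt).continuousWithinAt
    have hmono : StrictMonoOn (fun s => y0fun a l1 l2 s) (Set.Ioi 0) := by
      apply strictMonoOn_of_deriv_pos (convex_Ioi 0) hcont0
      intro t ht
      rw [interior_Ioi] at ht
      rw [(hasDerivAt_y0 (a := a) h1 h2 ht).deriv]
      exact hdy0pos t ht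
    have hanti : StrictAntiOn (fun s => y1fun a l1 l2 s) (Set.Ioi 0) := by
      apply strictAntiOn_of_deriv_neg (convex_Ioi 0)
        (fun t ht => ((hasDerivAt_y1 (a := a) h1 h2 ht).continuousAt).continuousWithinAt)
      intro t ht
      rw [interior_Ioi] at ht
      rw [(hasDerivAt_y1 (a := a) h1 h2 ht).deriv]
      have hψp := psi_pos h1 h2 (ne_of_gt (by exact ht : (0:ℝ) < t))
      have hD : Real.exp (l1 * t) - Real.exp (l2 * t) ≠ 0 := by
        have := den_pos h1 h2 ht
        intro h0; rw [h0, mul_zero] at this; exact lt_irrefl 0 this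
      have hd : (0:ℝ) < l1 * l2 := mul_pos_of_neg_of_neg h1 (h2.trans h1)
      have := Real.exp_pos (l1 * t)
      have := Real.exp_pos (l2 * t)
      have hnum : 0 < a * (l1 - l2) * Real.exp (l1 * t) * Real.exp (l2 * t) * psi l1 l2 t := by
        positivity
      apply div_neg_of_neg_of_pos (neg_neg_of_pos hnum)
      positivity
    rintro x ⟨s, hs, rfl⟩ y ⟨u, hu, rfl⟩ hxy
    have hsu : s < u := by
      by_contra hle
      push_neg at hle
      rcases eq_or_lt_of_le hle with h | h
      · rw [h] at hxy; exact lt_irrefl _ hxy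
      · exact absurd (hmono hu hs h) (not_lt.mpr hxy.le)
    rw [hPL s hs, hPL u hu]
    exact hanti hs hu hsu
end

section
/- Let 0 > λ1 > λ2 and a > 0. The time-of-flight t(y0) of the left Poincaré map of Welander's piecewise-linear system admits, for y0 > 0 small, the expansion t = (2/a)·y0 + (2T/(3a²))·y0² + (2/9)·(2λ1² + λ1λ2 + 2λ2²)/a³·y0³ + O(y0⁴), where T = λ1 + λ2. -/
set_option maxHeartbeats 1000000

open Asymptotics Filter
open Real Set

noncomputable def rr (l1 l2 t : ℝ) : ℝ := t/2 - (l1+l2)*t^2/12 + l1*l2*t^3/24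

noncomputable def p5 (l t : ℝ) : ℝ := 1 + l*t + (l*t)^2/2 + (l*t)^3/6 + (l*t)^4/24

noncomputable def S1f (l1 l2 t : ℝ) : ℝ :=
  (l1*l2^5 + l1^2*l2^4 - l1^4*l2^2 - l1^5*l2)/144
  + (-(l1*l2^6) + l1^2*l2^5 - l1^5*l2^2 + l1^6*l2)*t/288
  + (l1^2*l2^6 - l1^6*l2^2)*t^2/576

noncomputable def S2f (l1 l2 t : ℝ) : ℝ :=
  (5:ℝ)/216*(l1^3+l2^3)
  + (-(l1^4+l2^4)/216 - (l1^3*l2 + l1*l2^3)/48 - 5*l1^2*l2^2/432)*t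
  + ((l1^5+l2^5)/3888 + 43*(l1^4*l2 + l1*l2^4)/7776 + 7*(l1^3*l2^2+l1^2*l2^3)/972)*t^2
  + (-(l1^5*l2 + l1*l2^5)/2592 - 11*(l1^4*l2^2+l1^2*l2^4)/5184 - l1^3*l2^3/576)*t^3
  + ((l1^5*l2^2+l1^2*l2^5)/5184 + (l1^4*l2^3+l1^3*l2^4)/3456)*t^4
  + (-(l1^5*l2^3+l1^3*l2^5)/31104 - l1^4*l2^4/62208)*t^5

lemma exp_taylor5 {x : ℝ} (hx : |x| ≤ 1) : |Real.exp x - p5 x 1| ≤ |x|^5 := by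
  have h := Real.exp_bound hx (n := 5) (by norm_num)
  have hs : ∑ m ∈ Finset.range 5, x ^ m / m.factorial
      = 1 + x*1 + (x*1)^2/2 + (x*1)^3/6 + (x*1)^4/24 := by
    simp [Finset.sum_range_succ, Nat.factorial]
  rw [hs] at h
  norm_num [Nat.factorial] at h
  refine le_trans (by simpa [p5] using h) ?_
  have h5 : (0:ℝ) ≤ |x|^5 := by positivity
  nlinarith

lemma idP (a l1 l2 t : ℝ) (ha : a ≠ 0) :
    t - ((2 / a) * (a * rr l1 l2 t) + (2 * (l1 + l2) / (3 * a ^ 2)) * (a * rr l1 l2 t) ^ 2 +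
      (2 / 9) * (2 * l1 ^ 2 + l1 * l2 + 2 * l2 ^ 2) / a ^ 3 * (a * rr l1 l2 t) ^ 3)
    = t^4 * S2f l1 l2 t := by
  unfold rr S2f
  field_simp
  ring

lemma idG (l1 l2 t : ℝ) :
    psi l1 l2 t - l1*l2*rr l1 l2 t*(Real.exp (l1*t) - Real.exp (l2*t))
    = t^5 * S1f l1 l2 t + (Real.exp (l1*t) - p5 l1 t)*(l2 - l1*l2*rr l1 l2 t)
      + (Real.exp (l2*t) - p5 l2 t)*(l1*l2*rr l1 l2 t - l1) := by
  unfold psi rr S1f p5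
  ring

noncomputable def phif (l1 l2 s : ℝ) : ℝ :=
  (l1 - l2) + l2 * Real.exp (-(l1*s)) - l1 * Real.exp (-(l2*s))

lemma phif_pos (l1 l2 : ℝ) (h1 : l1 < 0) (h2 : l2 < l1) {t : ℝ} (ht : 0 < t) :
    0 < phif l1 l2 t := by
  have hder : ∀ s : ℝ, HasDerivAt (phif l1 l2)
      (l1*l2*(Real.exp (-(l2*s)) - Real.exp (-(l1*s)))) s := by
    intro s
    have e1 : HasDerivAt (fun s : ℝ => Real.exp (-(l1*s))) (Real.exp (-(l1*s)) * -(l1*1)) s :=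
      (((hasDerivAt_id s).const_mul l1).neg).exp
    have e2 : HasDerivAt (fun s : ℝ => Real.exp (-(l2*s))) (Real.exp (-(l2*s)) * -(l2*1)) s :=
      (((hasDerivAt_id s).const_mul l2).neg).exp
    have := ((hasDerivAt_const s (l1 - l2)).add (e1.const_mul l2)).sub (e2.const_mul l1)
    exact this.congr_deriv (by ring)
  have hmono : StrictMonoOn (phif l1 l2) (Ici 0) := by
    apply strictMonoOn_of_deriv_pos (convex_Ici 0)
    · exact fun x _ => (hder x).continuousAt.continuousWithinAt
    · intro x hx
      rw [interior_Ici] at hx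
      rw [(hder x).deriv]
      have hll : 0 < l1 * l2 := mul_pos_of_neg_of_neg h1 (h2.trans h1)
      have : Real.exp (-(l1*x)) < Real.exp (-(l2*x)) := by
        apply Real.exp_lt_exp.2
        have := mul_lt_mul_of_pos_right h2 hx
        linarith
      nlinarith
  have h0 : phif l1 l2 0 = 0 := by simp [phif]
  have := hmono (self_mem_Ici) (le_of_lt ht : (0:ℝ) ≤ t) ht
  linarith [this]

lemma y0_hasDeriv (a l1 l2 : ℝ) (h1 : l1 < 0) (h2 : l2 < l1) {t : ℝ} (ht : 0 < t) :
    HasDerivAt (y0fun a l1 l2)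
      ((a*(l1*l2*(Real.exp (l1*t) - Real.exp (l2*t))) * (l1*l2*(Real.exp (l1*t) - Real.exp (l2*t)))
        - a * psi l1 l2 t * (l1*l2*(l1*Real.exp (l1*t) - l2*Real.exp (l2*t))))
        / (l1*l2*(Real.exp (l1*t) - Real.exp (l2*t)))^2) t := by
  have hll : 0 < l1 * l2 := mul_pos_of_neg_of_neg h1 (h2.trans h1)
  have hBpos : 0 < Real.exp (l1*t) - Real.exp (l2*t) := by
    have : Real.exp (l2*t) < Real.exp (l1*t) :=
      Real.exp_lt_exp.2 (mul_lt_mul_of_pos_right h2 ht)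
    linarith
  have hden : l1*l2*(Real.exp (l1*t) - Real.exp (l2*t)) ≠ 0 := by positivity
  have e1 : HasDerivAt (fun s : ℝ => Real.exp (l1*s)) (Real.exp (l1*t) * (l1*1)) t :=
    ((hasDerivAt_id t).const_mul l1).exp
  have e2 : HasDerivAt (fun s : ℝ => Real.exp (l2*s)) (Real.exp (l2*t) * (l2*1)) t :=
    ((hasDerivAt_id t).const_mul l2).exp
  have hnum : HasDerivAt (fun s => a * psi l1 l2 s)
      (a*(l1*l2*(Real.exp (l1*t) - Real.exp (l2*t)))) t := by
    have := (((hasDerivAt_const t (l1 - l2)).add (e1.const_mul l2)).sub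
      (e2.const_mul l1)).const_mul a
    exact this.congr_deriv (by ring)
  have hdenf : HasDerivAt (fun s => l1*l2*(Real.exp (l1*s) - Real.exp (l2*s)))
      (l1*l2*(l1*Real.exp (l1*t) - l2*Real.exp (l2*t))) t := by
    have := (e1.sub e2).const_mul (l1*l2)
    exact this.congr_deriv (by ring)
  have := hnum.div hdenf hden
  exact this

lemma y0_strictMono (a l1 l2 : ℝ) (ha : 0 < a) (h1 : l1 < 0) (h2 : l2 < l1) :
    StrictMonoOn (y0fun a l1 l2) (Ioi 0) := by
  apply strictMonoOn_of_deriv_pos (convex_Ioi 0)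
  · exact fun x hx => (y0_hasDeriv a l1 l2 h1 h2 hx).continuousAt.continuousWithinAt
  · intro t ht
    rw [interior_Ioi] at ht
    rw [(y0_hasDeriv a l1 l2 h1 h2 ht).deriv]
    have hll : 0 < l1 * l2 := mul_pos_of_neg_of_neg h1 (h2.trans h1)
    have hBpos : 0 < Real.exp (l1*t) - Real.exp (l2*t) := by
      have : Real.exp (l2*t) < Real.exp (l1*t) :=
        Real.exp_lt_exp.2 (mul_lt_mul_of_pos_right h2 ht)
      linarith
    have hphi := phif_pos l1 l2 h1 h2 ht
    have hu : Real.exp (-(l1*t)) = (Real.exp (l1*t))⁻¹ := by rw [← Real.exp_neg]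
    have hv : Real.exp (-(l2*t)) = (Real.exp (l2*t))⁻¹ := by rw [← Real.exp_neg]
    have hupos := Real.exp_pos (l1*t)
    have hvpos := Real.exp_pos (l2*t)
    have key : l1*l2*(Real.exp (l1*t) - Real.exp (l2*t))^2
        - psi l1 l2 t*(l1*Real.exp (l1*t) - l2*Real.exp (l2*t))
        = (l1-l2)*(Real.exp (l1*t)*Real.exp (l2*t)*phif l1 l2 t) := by
      unfold psi phif
      rw [hu, hv]
      field_simp
      ring
    have hnumpos : 0 < (l1-l2)*(Real.exp (l1*t)*Real.exp (l2*t)*phif l1 l2 t) := by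
      have : 0 < l1 - l2 := by linarith
      positivity
    rw [div_pos_iff]
    left
    constructor
    · have heq : a * (l1*l2*(Real.exp (l1*t) - Real.exp (l2*t))) * (l1*l2*(Real.exp (l1*t) - Real.exp (l2*t)))
          - a * psi l1 l2 t * (l1*l2*(l1*Real.exp (l1*t) - l2*Real.exp (l2*t)))
          = a*(l1*l2)*((l1-l2)*(Real.exp (l1*t)*Real.exp (l2*t)*phif l1 l2 t)) := by
        rw [← key]; ring
      rw [heq]
      exact mul_pos (mul_pos ha hll) hnumpos
    · positivity


lemma rr_def (l1 l2 t : ℝ) : rr l1 l2 t = t/2 - (l1+l2)*t^2/12 + l1*l2*t^3/24 := rfl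

lemma p5_eq (l t : ℝ) : p5 (l*t) 1 = p5 l t := by unfold p5; ring

lemma S1f_cont (l1 l2 : ℝ) : Continuous (S1f l1 l2) := by unfold S1f; fun_prop

lemma S2f_cont (l1 l2 : ℝ) : Continuous (S2f l1 l2) := by unfold S2f; fun_prop

lemma rr_cont (l1 l2 : ℝ) : Continuous (rr l1 l2) := by unfold rr; fun_prop

lemma y0_contAt (a l1 l2 : ℝ) (h1 : l1 < 0) (h2 : l2 < l1) {t : ℝ} (ht : 0 < t) :
    ContinuousAt (y0fun a l1 l2) t :=
  (y0_hasDeriv a l1 l2 h1 h2 ht).continuousAt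

theorem time_of_flight_expansion (a l1 l2 : ℝ) (ha : a > 0) (h1 : 0 > l1) (h2 : l1 > l2) :
    ∃ τ : ℝ → ℝ, (∀ t : ℝ, t > 0 → τ (y0fun a l1 l2 t) = t) ∧
      (fun y : ℝ => τ y - ((2 / a) * y + (2 * (l1 + l2) / (3 * a ^ 2)) * y ^ 2 +
          (2 / 9) * (2 * l1 ^ 2 + l1 * l2 + 2 * l2 ^ 2) / a ^ 3 * y ^ 3)) =O[nhdsWithin 0 (Set.Ioi 0)]
        fun y : ℝ => y ^ 4 := by
  classical
  have hl1 : l1 < 0 := h1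
  have hl2 : l2 < 0 := lt_trans h2 h1
  have hll : 0 < l1 * l2 := mul_pos_of_neg_of_neg hl1 hl2
  have hd12 : 0 < l1 - l2 := by linarith
  set Pf : ℝ → ℝ := fun y => (2 / a) * y + (2 * (l1 + l2) / (3 * a ^ 2)) * y ^ 2 +
      (2 / 9) * (2 * l1 ^ 2 + l1 * l2 + 2 * l2 ^ 2) / a ^ 3 * y ^ 3 with hPf
  -- delta0
  set δ0 : ℝ := min 1 (1/(-l2)) with hδ0def
  have hδ0 : 0 < δ0 := lt_min one_pos (div_pos one_pos (by linarith))
  have hδ01 : δ0 ≤ 1 := min_le_left _ _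
  have hδ0r : δ0 ≤ 1/(-l2) := min_le_right _ _
  -- compact bounds
  obtain ⟨MS1, hMS1⟩ := (isCompact_Icc (a := (0:ℝ)) (b := δ0)).exists_bound_of_continuousOn
    (S1f_cont l1 l2).continuousOn
  obtain ⟨MS2, hMS2⟩ := (isCompact_Icc (a := (0:ℝ)) (b := δ0)).exists_bound_of_continuousOn
    (S2f_cont l1 l2).continuousOn
  obtain ⟨MX, hMX⟩ := (isCompact_Icc (a := (0:ℝ)) (b := δ0)).exists_bound_of_continuousOn
    (f := fun t => l2 - l1*l2*rr l1 l2 t)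
    (by have := rr_cont l1 l2; fun_prop)
  obtain ⟨MY, hMY⟩ := (isCompact_Icc (a := (0:ℝ)) (b := δ0)).exists_bound_of_continuousOn
    (f := fun t => l1*l2*rr l1 l2 t - l1)
    (by have := rr_cont l1 l2; fun_prop)
  have h0mem : (0:ℝ) ∈ Icc (0:ℝ) δ0 := ⟨le_refl _, hδ0.le⟩
  have hMS1n : 0 ≤ MS1 := le_trans (norm_nonneg _) (hMS1 0 h0mem)
  have hMS2n : 0 ≤ MS2 := le_trans (norm_nonneg _) (hMS2 0 h0mem)
  have hMXn : 0 ≤ MX := le_trans (norm_nonneg _) (hMX 0 h0mem)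
  have hMYn : 0 ≤ MY := le_trans (norm_nonneg _) (hMY 0 h0mem)
  set cB : ℝ := (l1 - l2) * Real.exp (l2 * δ0) with hcBdef
  have hcB : 0 < cB := by positivity
  set CG : ℝ := MS1 + |l1|^5 * MX + |l2|^5 * MY with hCGdef
  have hCGn : 0 ≤ CG := by positivity
  set C0 : ℝ := a * CG / (l1 * l2 * cB) with hC0def
  have hC0n : 0 ≤ C0 := by positivity
  set K1 : ℝ := |l1 + l2|/12 + l1*l2/24 with hK1def
  have hK1n : 0 ≤ K1 := by positivity
  set δ : ℝ := min δ0 (a/(8*(a*K1+C0)+1)) with hδdef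
  have hδpos : 0 < δ := lt_min hδ0 (by positivity)
  have hδδ0 : δ ≤ δ0 := min_le_left _ _
  have hδ1 : δ ≤ 1 := hδδ0.trans hδ01
  have hsmall : a*K1*δ + C0*δ^3 ≤ a/8 := by
    have hd2 : δ ≤ a/(8*(a*K1+C0)+1) := min_le_right _ _
    have h3 : δ^3 ≤ δ := by nlinarith [hδpos.le, hδ1, sq_nonneg (δ-1), sq_nonneg δ, mul_nonneg hδpos.le hδpos.le]
    have : (a*K1+C0)*δ ≤ (a*K1+C0)*(a/(8*(a*K1+C0)+1)) := by
      apply mul_le_mul_of_nonneg_left hd2 (by positivity)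
    have hfrac : (a*K1+C0)*(a/(8*(a*K1+C0)+1)) ≤ a/8 := by
      rw [← mul_div_assoc, div_le_div_iff₀ (by positivity) (by norm_num)]
      nlinarith
    have h4 : C0*δ^3 ≤ C0*δ := mul_le_mul_of_nonneg_left h3 hC0n
    linarith
  -- main pointwise estimate
  set L : ℝ := 2/a + (|2*(l1+l2)/(3*a^2)|)*(2*a)
      + ((2/9)*(2*l1^2+l1*l2+2*l2^2)/a^3)*(3*a^2) with hLdef
  have hLn : 0 ≤ L := by positivity
  set Cfin : ℝ := MS2 + L * C0 with hCfin
  have hCfinn : 0 ≤ Cfin := by positivity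
  clear_value Cfin L δ K1 C0 CG cB δ0
  have hest : ∀ t : ℝ, t ∈ Ioc 0 δ →
      (a/4)*t ≤ y0fun a l1 l2 t ∧ y0fun a l1 l2 t ≤ a*t ∧
      |t - Pf (y0fun a l1 l2 t)| ≤ Cfin * t^4 := by
    rintro t ⟨ht0, htδ'⟩
    have htδ0 : t ≤ δ0 := htδ'.trans hδδ0
    have ht1 : t ≤ 1 := htδ0.trans hδ01
    have htIcc : t ∈ Icc 0 δ0 := ⟨ht0.le, htδ0⟩
    have hMS1' : |S1f l1 l2 t| ≤ MS1 := by
      have h := hMS1 t htIcc; rwa [Real.norm_eq_abs] at h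
    have hMS2' : |S2f l1 l2 t| ≤ MS2 := by
      have h := hMS2 t htIcc; rwa [Real.norm_eq_abs] at h
    have hMX' : |l2 - l1*l2*rr l1 l2 t| ≤ MX := by
      have h := hMX t htIcc; rwa [Real.norm_eq_abs] at h
    have hMY' : |l1*l2*rr l1 l2 t - l1| ≤ MY := by
      have h := hMY t htIcc; rwa [Real.norm_eq_abs] at h
    have hδ0le : δ0 * (-l2) ≤ 1 := by
      have h := hδ0r
      rw [le_div_iff₀ (by linarith : (0:ℝ) < -l2)] at h
      exact h
    have hmm := mul_le_mul_of_nonneg_left htδ0 (neg_nonneg.2 hl2.le)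
    have hl2t : |l2*t| ≤ 1 := by
      rw [abs_of_nonpos (mul_nonpos_of_nonpos_of_nonneg hl2.le ht0.le)]
      nlinarith [hmm]
    have hl1t : |l1*t| ≤ 1 := by
      rw [abs_of_nonpos (mul_nonpos_of_nonpos_of_nonneg hl1.le ht0.le)]
      nlinarith [hmm, mul_le_mul_of_nonneg_right h2.le ht0.le]
    have habs5 : ∀ l : ℝ, |l*t|^5 = |l|^5 * t^5 := by
      intro l
      rw [abs_mul, mul_pow, abs_of_pos ht0]
    have he1 : |Real.exp (l1*t) - p5 l1 t| ≤ |l1|^5 * t^5 := by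
      have h := exp_taylor5 hl1t
      rw [p5_eq] at h
      rw [← habs5 l1]
      exact h
    have he2 : |Real.exp (l2*t) - p5 l2 t| ≤ |l2|^5 * t^5 := by
      have h := exp_taylor5 hl2t
      rw [p5_eq] at h
      rw [← habs5 l2]
      exact h
    -- lower bound for B
    have hBrw : Real.exp (l1*t) - Real.exp (l2*t)
        = Real.exp (l2*t)*(Real.exp ((l1-l2)*t) - 1) := by
      have harg : l2*t + (l1-l2)*t = l1*t := by ring
      rw [mul_sub, mul_one, ← Real.exp_add, harg]
    have hBlow : cB * t ≤ Real.exp (l1*t) - Real.exp (l2*t) := by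
      rw [hBrw]
      have hx : (l1-l2)*t ≤ Real.exp ((l1-l2)*t) - 1 := by
        linarith [Real.add_one_le_exp ((l1-l2)*t)]
      have hee : Real.exp (l2*δ0) ≤ Real.exp (l2*t) :=
        Real.exp_le_exp.2 (mul_le_mul_of_nonpos_left htδ0 hl2.le)
      calc cB*t = Real.exp (l2*δ0) * ((l1-l2)*t) := by rw [hcBdef]; ring
        _ ≤ Real.exp (l2*t) * ((l1-l2)*t) :=
            mul_le_mul_of_nonneg_right hee (by positivity)
        _ ≤ Real.exp (l2*t) * (Real.exp ((l1-l2)*t) - 1) :=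
            mul_le_mul_of_nonneg_left hx (Real.exp_pos _).le
    have hBpos : 0 < Real.exp (l1*t) - Real.exp (l2*t) :=
      lt_of_lt_of_le (mul_pos hcB ht0) hBlow
    have hdenpos : 0 < l1*l2*(Real.exp (l1*t) - Real.exp (l2*t)) := mul_pos hll hBpos
    -- numerator bound
    have hGb : |psi l1 l2 t - l1*l2*rr l1 l2 t*(Real.exp (l1*t) - Real.exp (l2*t))|
        ≤ CG * t^5 := by
      rw [idG l1 l2 t]
      have b1 : |t^5 * S1f l1 l2 t| ≤ t^5 * MS1 := by
        rw [abs_mul, abs_of_nonneg (by positivity : (0:ℝ) ≤ t^5)]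
        exact mul_le_mul_of_nonneg_left hMS1' (by positivity)
      have b2 : |(Real.exp (l1*t) - p5 l1 t)*(l2 - l1*l2*rr l1 l2 t)| ≤ |l1|^5*t^5 * MX := by
        rw [abs_mul]
        exact mul_le_mul he1 hMX' (abs_nonneg _) (by positivity)
      have b3 : |(Real.exp (l2*t) - p5 l2 t)*(l1*l2*rr l1 l2 t - l1)| ≤ |l2|^5*t^5 * MY := by
        rw [abs_mul]
        exact mul_le_mul he2 hMY' (abs_nonneg _) (by positivity)
      calc |t^5 * S1f l1 l2 t + (Real.exp (l1*t) - p5 l1 t)*(l2 - l1*l2*rr l1 l2 t)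
            + (Real.exp (l2*t) - p5 l2 t)*(l1*l2*rr l1 l2 t - l1)|
          ≤ |t^5 * S1f l1 l2 t| + |(Real.exp (l1*t) - p5 l1 t)*(l2 - l1*l2*rr l1 l2 t)|
            + |(Real.exp (l2*t) - p5 l2 t)*(l1*l2*rr l1 l2 t - l1)| := abs_add_three _ _ _
        _ ≤ t^5 * MS1 + |l1|^5*t^5 * MX + |l2|^5*t^5 * MY := by linarith
        _ = CG * t^5 := by rw [hCGdef]; ring
    -- |y0 - a*rr| ≤ C0 t^4
    have hzw : |y0fun a l1 l2 t - a*rr l1 l2 t| ≤ C0*t^4 := by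
      have hrwy : y0fun a l1 l2 t - a*rr l1 l2 t
          = a*(psi l1 l2 t - l1*l2*rr l1 l2 t*(Real.exp (l1*t) - Real.exp (l2*t)))
            / (l1*l2*(Real.exp (l1*t) - Real.exp (l2*t))) := by
        unfold y0fun
        rw [eq_div_iff hdenpos.ne', sub_mul, div_mul_cancel₀ _ hdenpos.ne']
        ring
      rw [hrwy, abs_div, abs_of_pos hdenpos, abs_mul, abs_of_pos ha]
      have hnum : a*|psi l1 l2 t - l1*l2*rr l1 l2 t*(Real.exp (l1*t) - Real.exp (l2*t))|
          ≤ a*(CG*t^5) := mul_le_mul_of_nonneg_left hGb ha.le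
      have hdlow : 0 < l1*l2*(cB*t) := mul_pos hll (mul_pos hcB ht0)
      have hdle : l1*l2*(cB*t) ≤ l1*l2*(Real.exp (l1*t) - Real.exp (l2*t)) :=
        mul_le_mul_of_nonneg_left hBlow hll.le
      calc a*|psi l1 l2 t - l1*l2*rr l1 l2 t*(Real.exp (l1*t) - Real.exp (l2*t))|
            / (l1*l2*(Real.exp (l1*t) - Real.exp (l2*t)))
          ≤ a*(CG*t^5) / (l1*l2*(cB*t)) :=
            div_le_div₀ (mul_nonneg ha.le (mul_nonneg hCGn (by positivity))) hnum hdlow hdle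
        _ = C0*t^4 := by rw [hC0def]; field_simp
    -- |rr - t/2| ≤ K1 t^2
    have ht3 : l1*l2*t^3 ≤ l1*l2*t^2 := by
      have h := mul_le_mul_of_nonneg_left ht1 (mul_nonneg hll.le (sq_nonneg t))
      calc l1*l2*t^3 = l1*l2*t^2*t := by ring
        _ ≤ l1*l2*t^2*1 := h
        _ = l1*l2*t^2 := by ring
    have hrr : |rr l1 l2 t - t/2| ≤ K1*t^2 := by
      have hid : rr l1 l2 t - t/2 = -((l1+l2)*t^2/12) + l1*l2*t^3/24 := by
        rw [rr_def]; ring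
      rw [hid, hK1def]
      have ha1 : |(-((l1+l2)*t^2/12)) + l1*l2*t^3/24|
          ≤ |(-((l1+l2)*t^2/12))| + |l1*l2*t^3/24| := abs_add_le _ _
      have ha2 : |(-((l1+l2)*t^2/12))| = (|l1+l2|)*t^2/12 := by
        rw [abs_neg, abs_div, abs_mul, abs_of_nonneg (sq_nonneg t)]
        norm_num
      have ha3 : |l1*l2*t^3/24| = l1*l2*t^3/24 := abs_of_nonneg (by positivity)
      linarith [ht3, ha1, ha2.le, ha2.ge, ha3.le, ha3.ge]
    -- assemble linear facts
    have hz1 := (abs_le.1 hzw).1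
    have hz2 := (abs_le.1 hzw).2
    have hr1 := (abs_le.1 hrr).1
    have hr2 := (abs_le.1 hrr).2
    have har1 : a*(t/2 - K1*t^2) ≤ a*rr l1 l2 t :=
      mul_le_mul_of_nonneg_left (by linarith) ha.le
    have har2 : a*rr l1 l2 t ≤ a*(t/2 + K1*t^2) :=
      mul_le_mul_of_nonneg_left (by linarith) ha.le
    have htK : t^2 ≤ δ*t := by
      have h := mul_le_mul_of_nonneg_right htδ' ht0.le
      calc t^2 = t*t := by ring
        _ ≤ δ*t := h
    have ht4' : t^4 ≤ δ^3*t := by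
      have h := mul_le_mul_of_nonneg_right (pow_le_pow_left₀ ht0.le htδ' 3) ht0.le
      calc t^4 = t^3*t := by ring
        _ ≤ δ^3*t := h
    have hC0t : C0*t^4 ≤ C0*(δ^3*t) := mul_le_mul_of_nonneg_left ht4' hC0n
    have hK1t : a*(K1*t^2) ≤ a*(K1*(δ*t)) :=
      mul_le_mul_of_nonneg_left (mul_le_mul_of_nonneg_left htK hK1n) ha.le
    have hsm : (a*K1*δ + C0*δ^3)*t ≤ (a/8)*t := mul_le_mul_of_nonneg_right hsmall ht0.le
    have hat : 0 ≤ a*t := mul_nonneg ha.le ht0.le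
    have hpos0 : 0 ≤ C0*(δ^3*t) := mul_nonneg hC0n (by positivity)
    have hy0low : (a/4)*t ≤ y0fun a l1 l2 t := by
      linarith [hz1, har1, hC0t, hK1t, hsm, hat]
    have hy0high : y0fun a l1 l2 t ≤ a*t := by
      linarith [hz2, har2, hC0t, hK1t, hsm, hat]
    refine ⟨hy0low, hy0high, ?_⟩
    -- Lipschitz on P
    have hya : |y0fun a l1 l2 t| ≤ a := by
      rw [abs_of_pos (lt_of_lt_of_le (by positivity) hy0low)]
      have h := mul_le_mul_of_nonneg_left ht1 ha.le
      linarith [hy0high]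
    have hwa : |a*rr l1 l2 t| ≤ a := by
      have hata : a*t ≤ a := by
        have h := mul_le_mul_of_nonneg_left ht1 ha.le
        linarith
      have hu1 : a*rr l1 l2 t ≤ a := by
        linarith [har2, hK1t, hsm, hpos0, hat, hata]
      have hu2 : -a ≤ a*rr l1 l2 t := by
        linarith [har1, hK1t, hsm, hpos0, hat, hata]
      rw [abs_le]; exact ⟨hu2, hu1⟩
    have hP1 : |t - Pf (a*rr l1 l2 t)| ≤ MS2 * t^4 := by
      have hPeq : t - Pf (a*rr l1 l2 t) = t^4 * S2f l1 l2 t := by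
        simp only [hPf]
        exact idP a l1 l2 t ha.ne'
      rw [hPeq, abs_mul, abs_of_nonneg (by positivity : (0:ℝ) ≤ t^4)]
      calc t^4 * |S2f l1 l2 t| ≤ t^4 * MS2 :=
            mul_le_mul_of_nonneg_left hMS2' (by positivity : (0:ℝ) ≤ t^4)
        _ = MS2 * t^4 := by ring
    have hLip : |Pf (a*rr l1 l2 t) - Pf (y0fun a l1 l2 t)|
        ≤ L * |a*rr l1 l2 t - y0fun a l1 l2 t| := by
      set x := a*rr l1 l2 t with hxdef
      set z := y0fun a l1 l2 t with hzdef
      have hid2 : Pf x - Pf z = (x - z)*(2/a + (2*(l1+l2)/(3*a^2))*(x+z)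
          + (2/9)*(2*l1^2+l1*l2+2*l2^2)/a^3*(x^2+x*z+z^2)) := by
        simp only [hPf]; ring
      rw [hid2, abs_mul, mul_comm]
      refine mul_le_mul_of_nonneg_right ?_ (abs_nonneg _)
      have hxz : |x + z| ≤ 2*a := by
        calc |x + z| ≤ |x| + |z| := abs_add_le _ _
          _ ≤ 2*a := by linarith
      have hsq : |x^2 + x*z + z^2| ≤ 3*a^2 := by
        have h1 : |x^2| ≤ a^2 := by
          rw [abs_of_nonneg (sq_nonneg x), ← sq_abs x]
          exact pow_le_pow_left₀ (abs_nonneg x) hwa 2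
        have h2 : |x*z| ≤ a^2 := by
          rw [abs_mul]
          calc (|x|)*(|z|) ≤ a*a := mul_le_mul hwa hya (abs_nonneg z) ha.le
            _ = a^2 := by ring
        have h3 : |z^2| ≤ a^2 := by
          rw [abs_of_nonneg (sq_nonneg z), ← sq_abs z]
          exact pow_le_pow_left₀ (abs_nonneg z) hya 2
        calc |x^2 + x*z + z^2| ≤ |x^2| + |x*z| + |z^2| := abs_add_three _ _ _
          _ ≤ 3*a^2 := by linarith
      have hp3 : (0:ℝ) ≤ (2/9)*(2*l1^2+l1*l2+2*l2^2)/a^3 := by positivity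
      calc |2/a + (2*(l1+l2)/(3*a^2))*(x+z)
            + (2/9)*(2*l1^2+l1*l2+2*l2^2)/a^3*(x^2+x*z+z^2)|
          ≤ |2/a| + |(2*(l1+l2)/(3*a^2))*(x+z)|
            + |(2/9)*(2*l1^2+l1*l2+2*l2^2)/a^3*(x^2+x*z+z^2)| := abs_add_three _ _ _
        _ ≤ 2/a + (|2*(l1+l2)/(3*a^2)|)*(2*a)
            + ((2/9)*(2*l1^2+l1*l2+2*l2^2)/a^3)*(3*a^2) := by
            have e1 : |2/a| = 2/a := abs_of_pos (by positivity)
            have e2 : |(2*(l1+l2)/(3*a^2))*(x+z)| ≤ (|2*(l1+l2)/(3*a^2)|)*(2*a) := by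
              rw [abs_mul]
              exact mul_le_mul_of_nonneg_left hxz (abs_nonneg _)
            have e3 : |(2/9)*(2*l1^2+l1*l2+2*l2^2)/a^3*(x^2+x*z+z^2)|
                ≤ ((2/9)*(2*l1^2+l1*l2+2*l2^2)/a^3)*(3*a^2) := by
              rw [abs_mul, abs_of_nonneg hp3]
              exact mul_le_mul_of_nonneg_left hsq hp3
            linarith
        _ = L := by rw [hLdef]
    have hfin : |a*rr l1 l2 t - y0fun a l1 l2 t| ≤ C0*t^4 := by
      rw [abs_sub_comm]; exact hzw
    calc |t - Pf (y0fun a l1 l2 t)|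
        = |(t - Pf (a*rr l1 l2 t)) + (Pf (a*rr l1 l2 t) - Pf (y0fun a l1 l2 t))| := by
          ring_nf
      _ ≤ |t - Pf (a*rr l1 l2 t)| + |Pf (a*rr l1 l2 t) - Pf (y0fun a l1 l2 t)| := abs_add_le _ _
      _ ≤ MS2 * t^4 + L*(C0*t^4) := by
          have := hLip.trans (mul_le_mul_of_nonneg_left hfin hLn)
          linarith
      _ = Cfin * t^4 := by rw [hCfin]; ring
  -- define tau
  set y0 := y0fun a l1 l2 with hy0def
  have hinj : InjOn y0 (Ioi 0) := (y0_strictMono a l1 l2 ha hl1 h2).injOn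
  refine ⟨fun y => if h : ∃ s, 0 < s ∧ y0 s = y then h.choose else 0, ?_, ?_⟩
  · intro t ht
    have hex : ∃ s, 0 < s ∧ y0 s = y0 t := ⟨t, ht, rfl⟩
    have hb : (fun y => if h : ∃ s, 0 < s ∧ y0 s = y then h.choose else 0) (y0 t)
        = (if h : ∃ s, 0 < s ∧ y0 s = y0 t then h.choose else 0) := rfl
    rw [hb, dif_pos hex]
    exact hinj hex.choose_spec.1 ht hex.choose_spec.2
  · apply Asymptotics.IsBigO.of_bound (Cfin * (4/a)^4)
    have hεpos : 0 < a*δ/4 := div_pos (mul_pos ha hδpos) (by norm_num)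
    filter_upwards [Ioo_mem_nhdsGT_of_mem (⟨le_refl 0, hεpos⟩ : (0:ℝ) ∈ Ico 0 (a*δ/4))]
      with y hy
    obtain ⟨hy0', hyε⟩ := hy
    -- find t with y0 t = y
    have hty : 0 < y/a := by positivity
    have htyδ : y/a ≤ δ := by
      rw [div_le_iff₀ ha]
      nlinarith
    have hcont : ContinuousOn y0 (Icc (y/a) δ) := fun x hx =>
      (y0_contAt a l1 l2 hl1 h2 (lt_of_lt_of_le hty hx.1)).continuousWithinAt
    have hlow : y0 (y/a) ≤ y := by
      have := (hest (y/a) ⟨hty, htyδ⟩).2.1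
      calc y0 (y/a) ≤ a*(y/a) := this
        _ = y := by field_simp
    have hhigh : y ≤ y0 δ := by
      have := (hest δ ⟨hδpos, le_refl _⟩).1
      nlinarith
    obtain ⟨t, htmem, hyt⟩ := intermediate_value_Icc htyδ hcont ⟨hlow, hhigh⟩
    have htpos : 0 < t := lt_of_lt_of_le hty htmem.1
    have htδ : t ≤ δ := htmem.2
    have hex : ∃ s, 0 < s ∧ y0 s = y := ⟨t, htpos, hyt⟩
    have hb : (fun y => if h : ∃ s, 0 < s ∧ y0 s = y then h.choose else 0) y
        = (if h : ∃ s, 0 < s ∧ y0 s = y then h.choose else 0) := rfl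
    simp only [hb, dif_pos hex]
    have : hex.choose = t := hinj hex.choose_spec.1 htpos (hex.choose_spec.2.trans hyt.symm)
    rw [this]
    obtain ⟨hb1, hb2, hb3⟩ := hest t ⟨htpos, htδ⟩
    rw [hyt] at hb3 hb1
    have ht4 : t ≤ (4/a)*y := by
      have hmul := mul_le_mul_of_nonneg_left hb1 (le_of_lt (by positivity : (0:ℝ) < 4/a))
      calc t = (4/a)*(a/4*t) := by field_simp
        _ ≤ (4/a)*y := hmul
    have ht4' : t^4 ≤ ((4/a)*y)^4 := by
      apply pow_le_pow_left₀ htpos.le ht4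
    calc ‖t - Pf y‖ = |t - Pf y| := rfl
      _ ≤ Cfin * t^4 := hb3
      _ ≤ Cfin * ((4/a)*y)^4 := mul_le_mul_of_nonneg_left ht4' hCfinn
      _ = Cfin * (4/a)^4 * y^4 := by ring
      _ = Cfin * (4/a)^4 * ‖y^4‖ := by
          rw [Real.norm_eq_abs, abs_of_nonneg (by positivity)]
end
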